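/- A set s is a level if and only if s is the set of all sets of rank less than rank(s); that is, s is a level iff for all x, x ∈ s ↔ rank(x) < rank(s). -/
import Mathlib

def pot (a : ZFSet) : ZFSet :=
  ZFSet.sep (fun x => ∃ c ∈ a, x ⊆ c) (ZFSet.powerset (ZFSet.sUnion a))

def Potent (a : ZFSet) : Prop := ∀ x, (∃ c, x ⊆ c ∧ c ∈ a) → x ∈ a

def IsHistory (h : ZFSet) : Prop := ∀ x ∈ h, x = pot (x ∩ h)

def IsLevel (s : ZFSet) : Prop := ∃ h, IsHistory h ∧ s = pot h

/-- `s` is a "V-set": the set of all sets of rank below `rank s`. -/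
def VS (s : ZFSet) : Prop := ∀ x : ZFSet, x ∈ s ↔ x.rank < s.rank

lemma mem_pot {a x : ZFSet} : x ∈ pot a ↔ ∃ c ∈ a, x ⊆ c := by
  unfold pot
  rw [ZFSet.mem_sep]
  constructor
  · exact fun h => h.2
  · rintro ⟨c, hc, hxc⟩
    refine ⟨ZFSet.mem_powerset.2 fun w hw => ?_, c, hc, hxc⟩
    exact ZFSet.mem_sUnion.2 ⟨c, hc, hxc hw⟩

lemma vset_pot {b : ZFSet} (hb : ∀ d ∈ b, VS d) : VS (pot b) := by
  intro x
  constructor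
  · exact ZFSet.rank_lt_of_mem
  · intro hx
    have hle : (pot b).rank ≤ b.rank := by
      rw [ZFSet.rank_le_iff]
      intro y hy
      obtain ⟨d, hd, hyd⟩ := mem_pot.1 hy
      exact lt_of_le_of_lt (ZFSet.rank_mono hyd) (ZFSet.rank_lt_of_mem hd)
    obtain ⟨d, hd, hxd⟩ := ZFSet.lt_rank_iff.1 (lt_of_lt_of_le hx hle)
    refine mem_pot.2 ⟨d, hd, fun w hw => ?_⟩
    exact (hb d hd w).2 (lt_of_lt_of_le (ZFSet.rank_lt_of_mem hw) hxd)

lemma exists_vset {s : ZFSet} (hs : VS s) {y : ZFSet} (hy : y.rank < s.rank) :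
    ∃ c, c ∈ s ∧ VS c ∧ c.rank = y.rank ∧ y ⊆ c := by
  set c : ZFSet := ZFSet.sep (fun z => z.rank < y.rank) s with hc
  have memc : ∀ z : ZFSet, z ∈ c ↔ z.rank < y.rank := by
    intro z
    rw [hc, ZFSet.mem_sep]
    exact ⟨fun h => h.2, fun h => ⟨(hs z).2 (h.trans hy), h⟩⟩
  have hrank : c.rank = y.rank := by
    apply le_antisymm
    · exact ZFSet.rank_le_iff.2 fun z hz => (memc z).1 hz
    · exact ZFSet.rank_le_iff.2 fun w hw =>
        ZFSet.rank_lt_of_mem ((memc w).2 (ZFSet.rank_lt_of_mem hw))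
  have hvs : VS c := fun z => by rw [memc z, hrank]
  refine ⟨c, (hs c).2 (hrank ▸ hy), hvs, hrank, fun w hw => ?_⟩
  exact (memc w).2 (ZFSet.rank_lt_of_mem hw)

theorem stmt16 (s : ZFSet) :
    IsLevel s ↔ ∀ x : ZFSet, x ∈ s ↔ x.rank < s.rank := by
  constructor
  · rintro ⟨h, hh, rfl⟩
    have key : ∀ c : ZFSet, c ∈ h → VS c := by
      intro c
      induction c using ZFSet.inductionOn with
      | _ c IH =>
        intro hc
        have hce := hh c hc
        have : VS (pot (c ∩ h)) := vset_pot fun d hd => by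
          rw [ZFSet.mem_inter] at hd
          exact IH d hd.1 hd.2
        rwa [← hce] at this
    exact vset_pot key
  · intro hs
    set h : ZFSet := ZFSet.sep VS s with hdef
    have memh : ∀ x : ZFSet, x ∈ h ↔ x ∈ s ∧ VS x := fun x => by
      rw [hdef, ZFSet.mem_sep]
    refine ⟨h, ?_, ?_⟩
    · intro x hx
      obtain ⟨hxs, hvx⟩ := (memh x).1 hx
      apply ZFSet.ext
      intro y
      constructor
      · intro hy
        obtain ⟨c, hcx, hvc, hrc, hyc⟩ := exists_vset hvx (ZFSet.rank_lt_of_mem hy)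
        have hcs : c ∈ s := (hs c).2 (lt_trans (ZFSet.rank_lt_of_mem hcx) ((hs x).1 hxs))
        exact mem_pot.2 ⟨c, ZFSet.mem_inter.2 ⟨hcx, (memh c).2 ⟨hcs, hvc⟩⟩, hyc⟩
      · intro hy
        obtain ⟨c, hc, hyc⟩ := mem_pot.1 hy
        rw [ZFSet.mem_inter] at hc
        exact (hvx y).2 (lt_of_le_of_lt (ZFSet.rank_mono hyc) (ZFSet.rank_lt_of_mem hc.1))
    · apply ZFSet.ext
      intro y
      constructor
      · intro hy
        obtain ⟨c, hcs, hvc, hrc, hyc⟩ := exists_vset hs ((hs y).1 hy)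
        exact mem_pot.2 ⟨c, (memh c).2 ⟨hcs, hvc⟩, hyc⟩
      · intro hy
        obtain ⟨c, hc, hyc⟩ := mem_pot.1 hy
        have hcs := ((memh c).1 hc).1
        exact (hs y).2 (lt_of_le_of_lt (ZFSet.rank_mono hyc) (ZFSet.rank_lt_of_mem hcs))
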